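/- Let p be a prime, d ≥ 1, and let V = (ZMod p)^d. Let H be a nontrivial subgroup of GL(V), the group of linear automorphisms of V, and suppose that H has exactly three orbits on V \ {0}, each of the same cardinality (p^d − 1)/3. Then the subgroup G of Sym(V) generated by all translations x ↦ x + v (v ∈ V) together with (the permutations of V induced by) the elements of H is a primitive permutation group on V. -/
import Mathlib


open MulAction

section Defs

variable {Ω : Type*}

/-- The automorphism group of a binary relation (digraph) `E` on `Ω`. -/
def AutRel (E : Ω → Ω → Prop) : Subgroup (Equiv.Perm Ω) where
  carrier := {σ | ∀ a b : Ω, E a b ↔ E (σ a) (σ b)}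
  one_mem' := by intro a b; simp
  mul_mem' := by
    intro σ τ hσ hτ a b
    simpa using (hτ a b).trans (hσ (τ a) (τ b))
  inv_mem' := by
    intro σ hσ a b
    simpa using (hσ (σ⁻¹ a) (σ⁻¹ b)).symm

/-- The 2-closure of a permutation group `G ≤ Sym(Ω)`: the group of all permutations
preserving every orbit of `G` on `Ω × Ω` (acting coordinatewise). -/
def twoClosure (G : Subgroup (Equiv.Perm Ω)) : Subgroup (Equiv.Perm Ω) where
  carrier := {σ | ∀ x : Ω × Ω, σ • x ∈ MulAction.orbit G x}
  one_mem' := by intro x; simp [MulAction.mem_orbit_self x]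
  mul_mem' := by
    intro σ τ hσ hτ x
    have h1 : τ • x ∈ MulAction.orbit G x := hτ x
    have h2 : σ • (τ • x) ∈ MulAction.orbit G (τ • x) := hσ (τ • x)
    rw [MulAction.orbit_eq_iff.mpr h1] at h2
    simpa [mul_smul] using h2
  inv_mem' := by
    intro σ hσ x
    have h : σ • (σ⁻¹ • x) ∈ MulAction.orbit G (σ⁻¹ • x) := hσ (σ⁻¹ • x)
    simp only [smul_inv_smul] at h
    exact MulAction.mem_orbit_symm.mp h

/-- A permutation group `G ≤ Sym(Ω)` is primitive if it is transitive on `Ω` and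
every block of its action is trivial. -/
def IsPrimitivePerm (G : Subgroup (Equiv.Perm Ω)) : Prop :=
  MulAction.IsPretransitive G Ω ∧
    ∀ B : Set Ω, MulAction.IsBlock G B → MulAction.IsTrivialBlock B

/-- The rank of a permutation group: the number of orbits on `Ω × Ω`. -/
noncomputable def permRank (G : Subgroup (Equiv.Perm Ω)) : ℕ :=
  Nat.card (MulAction.orbitRel.Quotient G (Ω × Ω))

end Defs

open Pointwise

set_option maxHeartbeats 1000000 in
theorem aux_pow_cases (p : ℕ) (hp : p.Prime) (k d m t : ℕ) (hd : 1 ≤ d) (hkd : k ≤ d)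
    (hm3 : 3 * m = p ^ d - 1) (hm1 : 1 ≤ m) (hmne1 : m ≠ 1)
    (htm : p ^ k - 1 = t * m) (ht3 : t ≤ 3) : p ^ k = 1 ∨ p ^ k = p ^ d := by
  have hpd2 : 2 ≤ p ^ d := by
    calc 2 ≤ p := hp.two_le
    _ = p ^ 1 := (pow_one p).symm
    _ ≤ p ^ d := Nat.pow_le_pow_right hp.pos hd
  have hpk1 : 1 ≤ p ^ k := Nat.one_le_pow _ _ hp.pos
  have hpkd : p ^ k ≤ p ^ d := Nat.pow_le_pow_right hp.pos hkd
  interval_cases t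
  · left; omega
  · exfalso
    rw [one_mul] at htm
    have heq : 3 * p ^ k = p ^ d + 2 := by omega
    have hk1 : k ≠ 0 := by intro h; rw [h, pow_zero] at htm; omega
    have hpdvd : p ∣ 2 := by
      have h1 : p ∣ 3 * p ^ k := Dvd.dvd.mul_left (dvd_pow_self p hk1) 3
      have h2 : p ∣ p ^ d := dvd_pow_self p (by omega)
      rw [heq] at h1
      exact (Nat.dvd_add_right h2).mp h1
    have hp2 : p = 2 := (Nat.prime_dvd_prime_iff_eq hp Nat.prime_two).mp hpdvd
    subst hp2
    obtain ⟨k', rfl⟩ := Nat.exists_eq_succ_of_ne_zero hk1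
    obtain ⟨d', rfl⟩ := Nat.exists_eq_succ_of_ne_zero (by omega : d ≠ 0)
    rw [pow_succ, pow_succ] at heq
    have heq2 : 3 * 2 ^ k' = 2 ^ d' + 1 := by omega
    have hk'0 : k' = 0 := by
      by_contra hk'
      have h1 : 2 ∣ 3 * 2 ^ k' := Dvd.dvd.mul_left (dvd_pow_self 2 hk') 3
      have hd'0 : d' ≠ 0 := by
        intro h; rw [h, pow_zero] at heq2; omega
      have h2 : 2 ∣ 2 ^ d' := dvd_pow_self 2 hd'0
      rw [heq2] at h1
      have := (Nat.dvd_add_right h2).mp h1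
      omega
    subst hk'0
    rw [pow_succ, pow_zero, one_mul] at htm
    omega
  · exfalso
    have heq : 3 * p ^ k = 2 * p ^ d + 1 := by omega
    have hk1 : k ≠ 0 := by intro h; rw [h, pow_zero] at htm; omega
    have h1 : p ∣ 3 * p ^ k := Dvd.dvd.mul_left (dvd_pow_self p hk1) 3
    have h2 : p ∣ 2 * p ^ d := Dvd.dvd.mul_left (dvd_pow_self p (by omega : d ≠ 0)) 2
    rw [heq] at h1
    have h3 := (Nat.dvd_add_right h2).mp h1
    have h4 := Nat.le_of_dvd one_pos h3
    have := hp.two_le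
    omega
  · right; omega
set_option maxHeartbeats 1000000 in

open MulAction

theorem affine_primitive_of_three_equal_orbits (p : ℕ) [Fact p.Prime] (d : ℕ)
    (hd : 1 ≤ d)
    (H : Subgroup ((Fin d → ZMod p) ≃ₗ[ZMod p] (Fin d → ZMod p)))
    (hne : H ≠ ⊥)
    (horbnum : {s : Set (Fin d → ZMod p) | ∃ v : Fin d → ZMod p, v ≠ 0 ∧
        s = {w : Fin d → ZMod p | ∃ h ∈ H, h v = w}}.ncard = 3)
    (horbsize : ∀ v : Fin d → ZMod p, v ≠ 0 →
        3 * {w : Fin d → ZMod p | ∃ h ∈ H, h v = w}.ncard = p ^ d - 1) :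
    IsPrimitivePerm (Subgroup.closure
      ((Set.range fun a : Fin d → ZMod p => Equiv.addRight a) ∪
        {σ : Equiv.Perm (Fin d → ZMod p) | ∃ h ∈ H, σ = h.toEquiv})) := by
  classical
  set V := Fin d → ZMod p with hV
  have hp : p.Prime := Fact.out
  set G := Subgroup.closure
      ((Set.range fun a : V => Equiv.addRight a) ∪
        {σ : Equiv.Perm V | ∃ h ∈ H, σ = h.toEquiv}) with hG
  have htr : ∀ a : V, Equiv.addRight a ∈ G :=
    fun a => Subgroup.subset_closure (Or.inl ⟨a, rfl⟩)
  have hHm : ∀ h ∈ H, (h : V ≃ₗ[ZMod p] V).toEquiv ∈ G :=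
    fun h hh => Subgroup.subset_closure (Or.inr ⟨h, hh, rfl⟩)
  -- cardinality of V
  have hcardV : Nat.card V = p ^ d := by
    show Nat.card (Fin d → ZMod p) = p ^ d
    simp [Nat.card_eq_fintype_card, ZMod.card]
  have hpd2 : 2 ≤ p ^ d := by
    calc 2 ≤ p := hp.two_le
    _ = p ^ 1 := (pow_one p).symm
    _ ≤ p ^ d := Nat.pow_le_pow_right hp.pos hd
  -- orbits
  set O : V → Set V := fun v => {w : V | ∃ h ∈ H, h v = w} with hO
  have hOself : ∀ v : V, v ∈ O v := fun v => ⟨1, H.one_mem, rfl⟩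
  have hOeq : ∀ v w : V, w ∈ O v → O w = O v := by
    rintro v w ⟨h, hh, rfl⟩
    ext x
    constructor
    · rintro ⟨h', hh', rfl⟩
      exact ⟨h' * h, H.mul_mem hh' hh, rfl⟩
    · rintro ⟨h'', hh'', rfl⟩
      exact ⟨h'' * h⁻¹, H.mul_mem hh'' (H.inv_mem hh),
        congrArg h'' (h.symm_apply_apply v)⟩
  have hOne : ∀ v : V, v ≠ 0 → (0 : V) ∉ O v := by
    rintro v hv ⟨h, hh, h0⟩
    exact hv (h.injective (by simpa using h0))
  -- orbit sizes
  set v0 : V := Pi.single (⟨0, hd⟩ : Fin d) (1 : ZMod p) with hv0def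
  have hv0 : v0 ≠ 0 := by
    intro h
    have := congrFun h ⟨0, hd⟩
    rw [hv0def, Pi.single_eq_same] at this
    exact one_ne_zero this
  set m : ℕ := (O v0).ncard with hmdef
  clear_value m
  have hm3 : 3 * m = p ^ d - 1 := by rw [hmdef]; exact horbsize v0 hv0
  have hmorb : ∀ v : V, v ≠ 0 → (O v).ncard = m := by
    intro v hv
    exact Nat.eq_of_mul_eq_mul_left (by norm_num) ((horbsize v hv).trans hm3.symm)
  have hm1 : 1 ≤ m := by omega
  -- m = 1 is impossible since H is nontrivial
  have hmne1 : m ≠ 1 := by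
    intro hm
    apply hne
    rw [Subgroup.eq_bot_iff_forall]
    intro h hh
    apply DFunLike.ext
    intro v
    show h v = v
    by_cases hv : v = 0
    · rw [hv]; exact h.map_zero
    · have h1 : (O v).ncard = 1 := by rw [hmorb v hv, hm]
      obtain ⟨a, ha⟩ := Set.ncard_eq_one.mp h1
      have hva : v = a := by have := hOself v; rw [ha] at this; exact this
      have hhv : h v ∈ O v := ⟨h, hh, rfl⟩
      rw [ha] at hhv
      rw [hhv, ← hva]
  constructor
  · -- transitivity
    constructor
    intro x y
    refine ⟨⟨Equiv.addRight (y - x), htr _⟩, ?_⟩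
    show Equiv.addRight (y - x) x = y
    show x + (y - x) = y
    abel
  · -- blocks
    intro B hB
    rcases B.eq_empty_or_nonempty with hBe | ⟨b0, hb0⟩
    · left; rw [hBe]; exact Set.subsingleton_empty
    set σ0 : G := ⟨Equiv.addRight (-b0), htr _⟩ with hσ0
    set B' : Set V := σ0 • B with hB'def
    have hB' : IsBlock G B' := hB.translate σ0
    have h0 : (0 : V) ∈ B' := by
      have : σ0 • b0 ∈ B' := Set.smul_mem_smul_set hb0
      have he : σ0 • b0 = 0 := by
        show b0 + (-b0) = 0
        abel
      rwa [he] at this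
    -- reduce to B'
    suffices htriv : IsTrivialBlock B' by
      rcases htriv with hsub | huniv
      · left
        intro x hx y hy
        have hx' : σ0 • x ∈ B' := Set.smul_mem_smul_set hx
        have hy' : σ0 • y ∈ B' := Set.smul_mem_smul_set hy
        have := hsub hx' hy'
        exact smul_left_cancel σ0 this
      · right
        have : σ0⁻¹ • B' = B := inv_smul_smul σ0 B
        rw [← this, huniv, Set.smul_set_univ]
    -- B' is closed under the relevant operations
    have htrB : ∀ v ∈ B', (⟨Equiv.addRight v, htr v⟩ : G) • B' = B' := by
      intro v hv
      exact hB'.smul_eq_of_mem (a := (0 : V)) h0 (by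
        show (0 : V) + v ∈ B'
        rwa [zero_add])
    have hadd : ∀ u ∈ B', ∀ v ∈ B', u + v ∈ B' := by
      intro u hu v hv
      have := htrB v hv
      rw [← this]
      exact Set.smul_mem_smul_set hu
    have hneg : ∀ v ∈ B', -v ∈ B' := by
      intro v hv
      have := htrB v hv
      rw [← this] at h0
      obtain ⟨w, hw, hw0⟩ := h0
      have h1 : w + v = 0 := hw0
      have h2 : w = -v := eq_neg_of_add_eq_zero_left h1
      rwa [h2] at hw
    have hHinv : ∀ h ∈ H, ∀ v ∈ B', (h : V ≃ₗ[ZMod p] V) v ∈ B' := by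
      intro h hh v hv
      have hg : (⟨(h : V ≃ₗ[ZMod p] V).toEquiv, hHm h hh⟩ : G) • B' = B' := by
        apply hB'.smul_eq_of_mem (a := (0 : V)) h0
        show (h : V ≃ₗ[ZMod p] V) 0 ∈ B'
        rw [h.map_zero]; exact h0
      rw [← hg]
      exact Set.smul_mem_smul_set hv
    -- B' is an additive subgroup, so has cardinality p ^ k
    set W : AddSubgroup V :=
      { carrier := B'
        add_mem' := fun {a b} ha hb => hadd a ha b hb
        zero_mem' := h0
        neg_mem' := fun {a} ha => hneg a ha } with hW
    have hdvd : Nat.card W ∣ p ^ d := by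
      rw [← hcardV]; exact AddSubgroup.card_addSubgroup_dvd_card W
    obtain ⟨k, hkd, hk⟩ := (Nat.dvd_prime_pow hp).mp hdvd
    have hncB' : B'.ncard = p ^ k := by
      rw [← hk, ← Nat.card_coe_set_eq]
      rfl
    have hpk1 : 1 ≤ p ^ k := Nat.one_le_pow _ _ hp.pos
    have hpkd : p ^ k ≤ p ^ d := Nat.pow_le_pow_right hp.pos hkd
    -- counting: B' \ {0} is a union of orbits of size m
    set A : Finset V := (Set.toFinite B').toFinset with hA
    have hmemA : ∀ x : V, x ∈ A ↔ x ∈ B' := fun x => Set.Finite.mem_toFinset _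
    have hAcard : A.card = p ^ k := by
      rw [← hncB', Set.ncard_eq_toFinset_card B' (Set.toFinite B')]
    set s : Finset V := A.erase 0 with hs
    have hscard : s.card = p ^ k - 1 := by
      rw [hs, Finset.card_erase_of_mem ((hmemA 0).mpr h0), hAcard]
    have hmems : ∀ x : V, x ∈ s ↔ x ∈ B' ∧ x ≠ 0 := by
      intro x
      rw [hs, Finset.mem_erase, hmemA]
      tauto
    have key := Finset.card_eq_sum_card_fiberwise
      (f := O) (s := s) (t := s.image O) (fun x hx => Finset.mem_image_of_mem _ hx)
    have hfib : ∀ b ∈ s.image O, (s.filter (fun x => O x = b)).card = m := by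
      intro b hb
      obtain ⟨v, hvs, rfl⟩ := Finset.mem_image.mp hb
      obtain ⟨hvB, hvne⟩ := (hmems v).mp hvs
      have hOvB : O v ⊆ B' := by
        rintro x ⟨h, hh, rfl⟩
        exact hHinv h hh v hvB
      have : s.filter (fun x => O x = O v) = (Set.toFinite (O v)).toFinset := by
        ext x
        rw [Finset.mem_filter, Set.Finite.mem_toFinset]
        constructor
        · rintro ⟨hxs, hxv⟩
          rw [← hxv]; exact hOself x
        · intro hxv
          refine ⟨(hmems x).mpr ⟨hOvB hxv, ?_⟩, hOeq v x hxv⟩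
          intro hx0
          exact hOne v hvne (hx0 ▸ hxv)
      rw [this, ← Set.ncard_eq_toFinset_card (O v) (Set.toFinite (O v))]
      exact hmorb v hvne
    rw [Finset.sum_congr rfl hfib, Finset.sum_const, smul_eq_mul] at key
    set t : ℕ := (s.image O).card with ht
    clear_value t
    have htm : p ^ k - 1 = t * m := by rw [← hscard]; exact key
    have ht3 : t ≤ 3 := by
      have h1 : t * m ≤ 3 * m := by
        rw [← htm, hm3]
        exact Nat.sub_le_sub_right hpkd 1
      exact Nat.le_of_mul_le_mul_right h1 hm1
    rcases aux_pow_cases p hp k d m t hd hkd hm3 hm1 hmne1 htm ht3 with hc1 | hc2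
    · -- B' is a singleton
      left
      have h1 : B'.ncard = 1 := by rw [hncB', hc1]
      obtain ⟨a, ha⟩ := Set.ncard_eq_one.mp h1
      rw [ha]
      exact Set.subsingleton_singleton
    · -- B' = univ
      right
      have hcard : B'.ncard = p ^ d := by rw [hncB', hc2]
      apply Set.eq_of_subset_of_ncard_le (Set.subset_univ B')
      rw [Set.ncard_univ, hcardV, hcard]
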